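/- For every a ∈ ℤ and every u ∈ ℂ, T^a(u) = T^{N+1−a}(u + s). (In particular both sides vanish unless 0 ≤ a ≤ N+1.) -/

import Mathlib

open Complex

noncomputable def oneSubXD (x w : ℂ → ℂ) : ℂ → ℂ := fun u => w u - x u * w (u + 2)

noncomputable def Lop (x : ℕ → ℂ → ℂ) : ℕ → (ℂ → ℂ) → (ℂ → ℂ)
  | 0 => fun w => w
  | k + 1 => fun w => oneSubXD (x (k + 1)) (Lop x k w)

namespace BetheDuality

open Finset

def Dc (S : Finset ℕ) (b : ℕ) : ℕ := (S.filter (fun c => b < c)).card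

def Ec (S : Finset ℕ) (b : ℕ) : ℕ := if b ∈ S then 1 else 0

noncomputable def trm (x : ℕ → ℂ → ℂ) (S : Finset ℕ) (u : ℂ) : ℂ :=
  ∏ b ∈ S, x b (u + 2 * (Dc S b : ℂ))

noncomputable def Ffac (A : ℕ → ℂ → ℂ) (S : Finset ℕ) (u : ℂ) (b : ℕ) : ℂ :=
  A b (u + 2 * (Dc S b : ℂ) + 2 * (Ec S (b+1) : ℂ)) /
    A b (u + 2 * (Dc S b : ℂ) + 2 * (Ec S b : ℂ))

def dualS (m : ℕ) (S : Finset ℕ) : Finset ℕ := (Finset.Icc 1 m \ S).image (fun j => m + 1 - j)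

lemma not_mem_top {k : ℕ} {S : Finset ℕ} (hS : S ⊆ Finset.Icc 1 k) : k + 1 ∉ S := by
  intro h; have := Finset.mem_Icc.mp (hS h); omega

lemma Dc_top {k : ℕ} {S : Finset ℕ} (hS : S ⊆ Finset.Icc 1 k) : Dc S k = 0 := by
  unfold Dc
  rw [Finset.filter_eq_empty_iff.mpr, Finset.card_empty]
  intro c hc; have := Finset.mem_Icc.mp (hS hc); omega

lemma Dc_insert_top {k b : ℕ} {S : Finset ℕ} (hS : S ⊆ Finset.Icc 1 k) (hb : b ≤ k) :
    Dc (insert (k+1) S) b = Dc S b + 1 := by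
  unfold Dc
  rw [Finset.filter_insert, if_pos (by omega), Finset.card_insert_of_notMem]
  intro h; exact not_mem_top hS (Finset.mem_of_mem_filter _ h)

lemma trm_insert (x : ℕ → ℂ → ℂ) {k : ℕ} {S : Finset ℕ} (hS : S ⊆ Finset.Icc 1 k) (u : ℂ) :
    trm x (insert (k+1) S) u = x (k+1) u * trm x S (u + 2) := by
  unfold trm
  rw [Finset.prod_insert (not_mem_top hS)]
  have h1 : Dc (insert (k+1) S) (k+1) = 0 := by
    apply Dc_top (k := k+1)
    intro c hc
    rcases Finset.mem_insert.mp hc with h | h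
    · simp [h]
    · have := Finset.mem_Icc.mp (hS h); simp [Finset.mem_Icc]; omega
  rw [h1]
  congr 1
  · norm_num
  · apply Finset.prod_congr rfl
    intro b hb
    have hbk : b ≤ k := (Finset.mem_Icc.mp (hS hb)).2
    rw [Dc_insert_top hS hbk]
    congr 1
    push_cast
    ring

lemma expand (x : ℕ → ℂ → ℂ) :
    ∀ (k : ℕ) (w : ℂ → ℂ) (u : ℂ), Lop x k w u =
      ∑ S ∈ (Finset.Icc 1 k).powerset, (-1 : ℂ)^S.card * trm x S u * w (u + 2 * (S.card : ℂ)) := by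
  intro k
  induction k with
  | zero =>
    intro w u
    rw [show Finset.Icc 1 0 = (∅ : Finset ℕ) from by simp]
    simp [Lop, trm]
  | succ k IH =>
    intro w u
    have hstep : Lop x (k+1) w u = Lop x k w u - x (k+1) u * Lop x k w (u + 2) := rfl
    rw [hstep, IH w u, IH w (u + 2)]
    rw [show Finset.Icc 1 (k+1) = insert (k+1) (Finset.Icc 1 k) from by
      ext c; simp [Finset.mem_Icc]; omega]
    rw [Finset.sum_powerset_insert (by simp [Finset.mem_Icc])]
    have h2 : ∑ S ∈ (Finset.Icc 1 k).powerset,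
        (-1:ℂ)^(insert (k+1) S).card * trm x (insert (k+1) S) u * w (u + 2 * ((insert (k+1) S).card : ℂ))
        = -(x (k+1) u * ∑ S ∈ (Finset.Icc 1 k).powerset,
            (-1:ℂ)^S.card * trm x S (u+2) * w (u + 2 + 2 * (S.card : ℂ))) := by
      rw [Finset.mul_sum, ← Finset.sum_neg_distrib]
      apply Finset.sum_congr rfl
      intro S hS
      have hS' : S ⊆ Finset.Icc 1 k := Finset.mem_powerset.mp hS
      rw [Finset.card_insert_of_notMem (not_mem_top hS'), trm_insert x hS' u]
      have harg : u + 2 * (((S.card + 1) : ℕ) : ℂ) = u + 2 + 2 * (S.card : ℂ) := by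
        push_cast; ring
      rw [harg, pow_succ]
      ring
    rw [h2]
    ring

lemma collect (A x : ℕ → ℂ → ℂ) (m : ℕ)
    (hAne : ∀ b, b ≤ m → ∀ u, A b u ≠ 0)
    (hx : ∀ b, 1 ≤ b → b ≤ m → ∀ u,
      x b u = A b u * A (b-1) (u+4) / (A (b-1) (u+2) * A b (u+2))) :
    ∀ k, k ≤ m → ∀ S, S ⊆ Finset.Icc 1 k → ∀ u,
      trm x S u = ∏ b ∈ Finset.range (k+1), Ffac A S u b := by
  intro k
  induction k with
  | zero =>
    intro _ S hS u
    have : S = ∅ := by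
      rw [show Finset.Icc 1 0 = (∅:Finset ℕ) from by simp] at hS
      exact Finset.subset_empty.mp hS
    subst this
    unfold trm Ffac Dc Ec
    simp only [Finset.prod_empty, Finset.notMem_empty, if_false, Finset.filter_empty,
      Finset.card_empty, Nat.zero_add, Finset.prod_range_one]
    exact (div_self (hAne 0 (by omega) _)).symm
  | succ k IH =>
    intro hkm S hS u
    by_cases hmem : k + 1 ∈ S
    · set S' := S.erase (k+1) with hS'def
      have hS' : S' ⊆ Finset.Icc 1 k := by
        intro c hc
        have h1 := Finset.mem_Icc.mp (hS (Finset.mem_of_mem_erase hc))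
        have h2 := Finset.ne_of_mem_erase hc
        simp [Finset.mem_Icc]; omega
      have hrw : S = insert (k+1) S' := (Finset.insert_erase hmem).symm
      have hDb : ∀ b, b ≤ k → Dc S b = Dc S' b + 1 := by
        intro b hb; rw [hrw]; exact Dc_insert_top hS' hb
      have hEb : ∀ b, b ≤ k → Ec S b = Ec S' b := by
        intro b hb; unfold Ec
        by_cases h : b ∈ S'
        · rw [if_pos (Finset.mem_of_mem_erase h), if_pos h]
        · rw [if_neg, if_neg h]
          intro hbS; exact h (Finset.mem_erase.mpr ⟨by omega, hbS⟩)
      have hpre : ∀ b ∈ Finset.range k, Ffac A S u b = Ffac A S' (u+2) b := by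
        intro b hb
        have hbk : b < k := Finset.mem_range.mp hb
        unfold Ffac
        rw [hDb b (by omega), hEb b (by omega), hEb (b+1) (by omega)]
        congr 2 <;> (push_cast; ring)
      have hDS'k : Dc S' k = 0 := Dc_top hS'
      have hDSk : Dc S k = 1 := by rw [hrw, Dc_insert_top hS' le_rfl, hDS'k]
      have hDSk1 : Dc S (k+1) = 0 := Dc_top hS
      have hESk1 : Ec S (k+1) = 1 := by unfold Ec; rw [if_pos hmem]
      have hESk2 : Ec S (k+2) = 0 := by
        unfold Ec; rw [if_neg]; intro h; have := Finset.mem_Icc.mp (hS h); omega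
      have hES'k1 : Ec S' (k+1) = 0 := by
        unfold Ec; rw [if_neg]; exact Finset.notMem_erase _ _
      have hkey : x (k+1) u * Ffac A S' (u+2) k = Ffac A S u k * Ffac A S u (k+1) := by
        unfold Ffac
        rw [hDS'k, hDSk, hDSk1, hESk1, hESk2, hES'k1, hEb k le_rfl]
        rw [hx (k+1) (by omega) hkm u]
        have e1 : u + 2*((0:ℕ):ℂ) + 2*((0:ℕ):ℂ) = u := by push_cast; ring
        have e2 : (u+2) + 2*((0:ℕ):ℂ) + 2*((0:ℕ):ℂ) = u + 2 := by push_cast; ring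
        have e3 : (u+2) + 2*((0:ℕ):ℂ) + 2*((Ec S' k:ℕ):ℂ) = u + 2 + 2*((Ec S' k:ℕ):ℂ) := by
          push_cast; ring
        have e4 : u + 2*((1:ℕ):ℂ) + 2*((1:ℕ):ℂ) = u + 4 := by push_cast; ring
        have e5 : u + 2*((1:ℕ):ℂ) + 2*((Ec S' k:ℕ):ℂ) = u + 2 + 2*((Ec S' k:ℕ):ℂ) := by
          push_cast; ring
        have e6 : u + 2*((0:ℕ):ℂ) + 2*((1:ℕ):ℂ) = u + 2 := by push_cast; ring
        rw [e2, e3, e4, e5, e6, e1]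
        have h1 : A k (u+2) ≠ 0 := hAne k (by omega) _
        have h2 : A (k+1) (u+2) ≠ 0 := hAne (k+1) hkm _
        have h3 : A k (u + 2 + 2*((Ec S' k:ℕ):ℂ)) ≠ 0 := hAne k (by omega) _
        have hk1 : k + 1 - 1 = k := rfl
        rw [hk1]
        field_simp
      have hL : trm x S u = x (k+1) u *
          ((∏ b ∈ Finset.range k, Ffac A S' (u+2) b) * Ffac A S' (u+2) k) := by
        rw [hrw, trm_insert x hS' u, IH (by omega) S' hS' (u+2), Finset.prod_range_succ]
      rw [hL]
      conv_rhs => rw [Finset.prod_range_succ, Finset.prod_range_succ]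
      rw [Finset.prod_congr rfl hpre]
      rw [mul_assoc, ← hkey]
      ring
    · have hS2 : S ⊆ Finset.Icc 1 k := by
        intro c hc
        have h1 := Finset.mem_Icc.mp (hS hc)
        have : c ≠ k + 1 := fun h => hmem (h ▸ hc)
        simp [Finset.mem_Icc]; omega
      rw [IH (by omega) S hS2 u]
      conv_rhs => rw [Finset.prod_range_succ]
      have : Ffac A S u (k+1) = 1 := by
        unfold Ffac
        have h1 : Ec S (k+1) = 0 := by unfold Ec; rw [if_neg hmem]
        have h2 : Ec S (k+2) = 0 := by
          unfold Ec; rw [if_neg]; intro h; have := Finset.mem_Icc.mp (hS2 h); omega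
        rw [h1, h2]
        exact div_self (hAne (k+1) hkm _)
      rw [this, mul_one]

lemma mem_dualS {m : ℕ} {S : Finset ℕ} {j : ℕ} :
    j ∈ dualS m S ↔ (1 ≤ j ∧ j ≤ m ∧ m + 1 - j ∉ S) := by
  simp only [dualS, Finset.mem_image, Finset.mem_sdiff, Finset.mem_Icc]
  constructor
  · rintro ⟨c, ⟨⟨h1, h2⟩, hc⟩, rfl⟩
    refine ⟨by omega, by omega, ?_⟩
    rwa [show m + 1 - (m + 1 - c) = c by omega]
  · rintro ⟨h1, h2, h3⟩
    exact ⟨m + 1 - j, ⟨⟨by omega, by omega⟩, h3⟩, by omega⟩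

lemma dualS_subset {m : ℕ} {S : Finset ℕ} : dualS m S ⊆ Finset.Icc 1 m := by
  intro j hj
  rcases mem_dualS.mp hj with ⟨h1, h2, _⟩
  exact Finset.mem_Icc.mpr ⟨h1, h2⟩

lemma dualS_dualS {m : ℕ} {S : Finset ℕ} (hS : S ⊆ Finset.Icc 1 m) :
    dualS m (dualS m S) = S := by
  ext j
  rw [mem_dualS]
  constructor
  · rintro ⟨h1, h2, h3⟩
    by_contra hjS
    exact h3 (mem_dualS.mpr ⟨by omega, by omega, by rwa [show m + 1 - (m + 1 - j) = j by omega]⟩)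
  · intro hj
    have hjm := Finset.mem_Icc.mp (hS hj)
    refine ⟨hjm.1, hjm.2, ?_⟩
    intro h
    rcases mem_dualS.mp h with ⟨_, _, h3⟩
    rw [show m + 1 - (m + 1 - j) = j by omega] at h3
    exact h3 hj

lemma card_dualS {m : ℕ} {S : Finset ℕ} (hS : S ⊆ Finset.Icc 1 m) :
    (dualS m S).card = m - S.card := by
  have hinj : Set.InjOn (fun j => m + 1 - j) ↑(Finset.Icc 1 m \ S) := by
    intro p hp q hq h
    simp only [Finset.coe_sdiff, Set.mem_diff, Finset.mem_coe, Finset.mem_Icc] at hp hq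
    dsimp only at h
    omega
  rw [dualS, Finset.card_image_of_injOn hinj, Finset.card_sdiff_of_subset hS, Nat.card_Icc]
  omega

lemma Dc_add_low {S : Finset ℕ} (b : ℕ) :
    Dc S b + (S.filter (fun c => c ≤ b)).card = S.card := by
  have h := Finset.card_filter_add_card_filter_not (s := S) (p := fun c => b < c)
  rw [Dc]
  rw [show (S.filter (fun c => c ≤ b)) = (S.filter (fun c => ¬ b < c)) from by
    apply Finset.filter_congr; intro c _; simp only [not_lt]]
  exact h

lemma Dc_dualS {m b : ℕ} {S : Finset ℕ} (hS : S ⊆ Finset.Icc 1 m) (hb1 : 1 ≤ b) (hb2 : b ≤ m) :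
    Dc (dualS m S) (m - b) + S.card = b + Dc S b := by
  have h1 : (dualS m S).filter (fun j => m - b < j)
      = (Finset.Icc 1 b \ S).image (fun j => m + 1 - j) := by
    ext j
    simp only [Finset.mem_filter, mem_dualS, Finset.mem_image, Finset.mem_sdiff, Finset.mem_Icc]
    constructor
    · rintro ⟨⟨ha1, ha2, ha3⟩, ha4⟩
      exact ⟨m + 1 - j, ⟨⟨by omega, by omega⟩, ha3⟩, by omega⟩
    · rintro ⟨c, ⟨⟨hc1, hc2⟩, hcS⟩, rfl⟩
      refine ⟨⟨by omega, by omega, ?_⟩, by omega⟩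
      rwa [show m + 1 - (m + 1 - c) = c by omega]
  have h2 : Dc (dualS m S) (m - b) = (Finset.Icc 1 b \ S).card := by
    have hinj : Set.InjOn (fun j => m + 1 - j) ↑(Finset.Icc 1 b \ S) := by
      intro p hp q hq h
      simp only [Finset.coe_sdiff, Set.mem_diff, Finset.mem_coe, Finset.mem_Icc] at hp hq
      dsimp only at h
      omega
    rw [Dc, h1, Finset.card_image_of_injOn hinj]
  have h3 : Finset.Icc 1 b \ S = Finset.Icc 1 b \ (S.filter (fun c => c ≤ b)) := by
    ext j
    simp only [Finset.mem_sdiff, Finset.mem_Icc, Finset.mem_filter]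
    constructor
    · rintro ⟨h, hn⟩; exact ⟨h, fun hc => hn hc.1⟩
    · rintro ⟨h, hn⟩; exact ⟨h, fun hc => hn ⟨hc, by omega⟩⟩
  have h4 : (S.filter (fun c => c ≤ b)) ⊆ Finset.Icc 1 b := by
    intro c hc
    rcases Finset.mem_filter.mp hc with ⟨hcS, hcb⟩
    have := Finset.mem_Icc.mp (hS hcS)
    exact Finset.mem_Icc.mpr ⟨this.1, hcb⟩
  have h5 := Finset.card_sdiff_of_subset h4
  have h6 := Finset.card_le_card h4
  have h7 := Dc_add_low (S := S) b
  rw [h2, h3, h5, Nat.card_Icc] at *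
  omega

lemma dualterm (A x : ℕ → ℂ → ℂ) (m : ℕ) (s : ℂ) (cc : ℕ → ℂ)
    (hA0 : ∀ u, A 0 u = 1) (hAm : ∀ u, A m u = 1)
    (hAne : ∀ b, b ≤ m → ∀ u, A b u ≠ 0)
    (hcne : ∀ b, b ≤ m → cc b ≠ 0)
    (hsym : ∀ b, b ≤ m → ∀ u, A (m - b) u = cc b * A b (u + (m:ℂ) - 2*(b:ℂ) + s))
    (hcol : ∀ S, S ⊆ Finset.Icc 1 m → ∀ u,
      trm x S u = ∏ b ∈ Finset.range (m+1), Ffac A S u b)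
    (S : Finset ℕ) (hS : S ⊆ Finset.Icc 1 m) (u : ℂ) :
    trm x S u = trm x (dualS m S) (u + 2*(S.card:ℂ) - m + s) := by
  have hper : ∀ b, b ≤ m → ∀ v, A b v = cc (m - b) * cc b * A b (v + 2*s) := by
    intro b hb v
    have h1 := hsym (m - b) (Nat.sub_le m b) v
    rw [show m - (m - b) = b by omega] at h1
    rw [hsym b hb] at h1
    have harg : v + (m:ℂ) - 2*((m - b : ℕ):ℂ) + s + (m:ℂ) - 2*(b:ℂ) + s = v + 2*s := by
      rw [Nat.cast_sub hb]; push_cast; ring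
    rw [harg] at h1
    rw [h1]; ring
  rw [hcol S hS u, hcol (dualS m S) dualS_subset _]
  rw [← Finset.prod_range_reflect (fun b => Ffac A (dualS m S) (u + 2*(S.card:ℂ) - m + s) b) (m+1)]
  apply Finset.prod_congr rfl
  intro b hb
  have hbm : b ≤ m := by have := Finset.mem_range.mp hb; omega
  show Ffac A S u b = Ffac A (dualS m S) (u + 2*(S.card:ℂ) - m + s) (m - b)
  by_cases hb0 : b = 0
  · rw [hb0, Nat.sub_zero]
    unfold Ffac
    simp only [hA0, hAm]
  by_cases hbM : b = m
  · rw [hbM, Nat.sub_self]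
    unfold Ffac
    simp only [hA0, hAm]
  have hb1 : 1 ≤ b := by omega
  have hd := Dc_dualS hS hb1 hbm
  have hdC : ((Dc (dualS m S) (m - b) : ℕ) : ℂ) = (b:ℂ) + ((Dc S b : ℕ):ℂ) - ((S.card : ℕ):ℂ) := by
    have h := congrArg (fun t : ℕ => (t : ℂ)) hd
    push_cast at h
    rw [eq_sub_iff_add_eq]
    exact h
  have hmem1 : (m - b ∈ dualS m S) ↔ (b + 1 ∉ S) := by
    rw [mem_dualS]
    constructor
    · rintro ⟨_, _, h⟩; rwa [show m + 1 - (m - b) = b + 1 by omega] at h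
    · intro h; exact ⟨by omega, by omega, by rwa [show m + 1 - (m - b) = b + 1 by omega]⟩
  have hmem2 : (m - b + 1 ∈ dualS m S) ↔ (b ∉ S) := by
    rw [mem_dualS]
    constructor
    · rintro ⟨_, _, h⟩; rwa [show m + 1 - (m - b + 1) = b by omega] at h
    · intro h; exact ⟨by omega, by omega, by rwa [show m + 1 - (m - b + 1) = b by omega]⟩
  have hE1 : ((Ec (dualS m S) (m - b) : ℕ) : ℂ) = 1 - ((Ec S (b+1) : ℕ):ℂ) := by
    unfold Ec
    by_cases h : b + 1 ∈ S
    · rw [if_pos h, if_neg (fun hc => (hmem1.mp hc) h)]; norm_num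
    · rw [if_pos (hmem1.mpr h), if_neg h]; norm_num
  have hE2 : ((Ec (dualS m S) (m - b + 1) : ℕ) : ℂ) = 1 - ((Ec S b : ℕ):ℂ) := by
    unfold Ec
    by_cases h : b ∈ S
    · rw [if_pos h, if_neg (fun hc => (hmem2.mp hc) h)]; norm_num
    · rw [if_pos (hmem2.mpr h), if_neg h]; norm_num
  have hEor : ∀ j, Ec S j = 0 ∨ Ec S j = 1 := by
    intro j; unfold Ec; split_ifs
    · right; rfl
    · left; rfl
  have hsw : ∀ (α : ℂ) (e : ℕ), e = 0 ∨ e = 1 →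
      A b (α + 2*(e:ℂ)) * A b (α + 2 - 2*(e:ℂ)) = A b α * A b (α + 2) := by
    rintro α e (rfl | rfl)
    · norm_num
    · rw [show α + 2*((1:ℕ):ℂ) = α + 2 by push_cast; ring,
        show α + 2 - 2*((1:ℕ):ℂ) = α by push_cast; ring]
      ring
  have key : ∀ (α X Y : ℂ) (e e' : ℕ), e = 0 ∨ e = 1 → e' = 0 ∨ e' = 1 →
      X = α + 2 - 2*(e:ℂ) + 2*s → Y = α + 2 - 2*(e':ℂ) + 2*s →
      A b (α + 2*(e':ℂ)) / A b (α + 2*(e:ℂ)) = (cc b * A b X) / (cc b * A b Y) := by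
    intro α X Y e e' he he' hX hY
    subst hX; subst hY
    have hKne : cc (m - b) * cc b ≠ 0 :=
      mul_ne_zero (hcne (m - b) (by omega)) (hcne b hbm)
    have q1 : A b (α + 2 - 2*(e:ℂ) + 2*s) = (cc (m - b) * cc b)⁻¹ * A b (α + 2 - 2*(e:ℂ)) := by
      rw [hper b hbm (α + 2 - 2*(e:ℂ))]
      field_simp
      rw [mul_assoc, mul_div_assoc, div_self hKne, mul_one]
    have q2 : A b (α + 2 - 2*(e':ℂ) + 2*s) = (cc (m - b) * cc b)⁻¹ * A b (α + 2 - 2*(e':ℂ)) := by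
      rw [hper b hbm (α + 2 - 2*(e':ℂ))]
      field_simp
      rw [mul_assoc, mul_div_assoc, div_self hKne, mul_one]
    rw [q1, q2, div_eq_div_iff (hAne b hbm _) (by
      exact mul_ne_zero (hcne b hbm) (mul_ne_zero (inv_ne_zero hKne) (hAne b hbm _)))]
    calc A b (α + 2*(e':ℂ)) * (cc b * ((cc (m - b) * cc b)⁻¹ * A b (α + 2 - 2*(e':ℂ))))
        = cc b * (cc (m - b) * cc b)⁻¹ * (A b (α + 2*(e':ℂ)) * A b (α + 2 - 2*(e':ℂ))) := by ring
      _ = cc b * (cc (m - b) * cc b)⁻¹ * (A b α * A b (α + 2)) := by rw [hsw α e' he']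
      _ = cc b * (cc (m - b) * cc b)⁻¹ * (A b (α + 2*(e:ℂ)) * A b (α + 2 - 2*(e:ℂ))) := by
          rw [hsw α e he]
      _ = cc b * ((cc (m - b) * cc b)⁻¹ * A b (α + 2 - 2*(e:ℂ))) * A b (α + 2*(e:ℂ)) := by ring
  unfold Ffac
  rw [hE1, hE2, hdC]
  simp only [hsym b hbm]
  refine key (u + 2 * ((Dc S b : ℕ) : ℂ)) _ _ (Ec S b) (Ec S (b+1)) (hEor b) (hEor (b+1)) ?_ ?_ <;>
    (push_cast; ring)

lemma extract (x : ℕ → ℂ → ℂ) (T' : ℕ → ℂ → ℂ) (m : ℕ)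
    (hexp : ∀ (w : ℂ → ℂ) (u : ℂ), Lop x m w u =
      ∑ S ∈ (Finset.Icc 1 m).powerset, (-1 : ℂ)^S.card * trm x S u * w (u + 2 * (S.card : ℂ)))
    (hTL : ∀ (w : ℂ → ℂ) (u : ℂ), Lop x m w u =
      ∑ a ∈ Finset.range (m+1), (-1:ℂ)^a * T' a (u + (a:ℂ)) * w (u + 2*(a:ℂ)))
    (a₀ : ℕ) (ha : a₀ ≤ m) (u : ℂ) :
    T' a₀ (u + (a₀:ℂ)) =
      ∑ S ∈ (Finset.Icc 1 m).powerset.filter (fun S => S.card = a₀), trm x S u := by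
  have h := (hexp (fun v => if v = u + 2*(a₀:ℂ) then 1 else 0) u).symm.trans
    (hTL (fun v => if v = u + 2*(a₀:ℂ) then 1 else 0) u)
  have hR : ∑ a ∈ Finset.range (m+1), (-1:ℂ)^a * T' a (u + (a:ℂ)) *
      (if u + 2*(a:ℂ) = u + 2*(a₀:ℂ) then (1:ℂ) else 0) = (-1:ℂ)^a₀ * T' a₀ (u + (a₀:ℂ)) := by
    rw [Finset.sum_eq_single a₀]
    · rw [if_pos rfl, mul_one]
    · intro a _ hne
      rw [if_neg, mul_zero]
      intro hc
      have h2 : (2:ℂ) * a = 2 * a₀ := add_left_cancel hc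
      field_simp at h2
      exact hne (by exact_mod_cast h2)
    · intro hnot
      exact absurd (Finset.mem_range.mpr (by omega)) hnot
  have hL : ∑ S ∈ (Finset.Icc 1 m).powerset, (-1:ℂ)^S.card * trm x S u *
      (if u + 2*((S.card:ℕ):ℂ) = u + 2*(a₀:ℂ) then (1:ℂ) else 0)
      = (-1:ℂ)^a₀ * ∑ S ∈ (Finset.Icc 1 m).powerset.filter (fun S => S.card = a₀), trm x S u := by
    rw [Finset.mul_sum, Finset.sum_filter]
    apply Finset.sum_congr rfl
    intro S _
    by_cases hc : S.card = a₀
    · rw [if_pos (by rw [hc]), if_pos hc, hc, mul_one]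
    · rw [if_neg, if_neg hc, mul_zero]
      intro h2
      have h3 : (2:ℂ) * S.card = 2 * a₀ := add_left_cancel h2
      field_simp at h3
      exact hc (by exact_mod_cast h3)
  rw [hL, hR] at h
  have hne : ((-1:ℂ)^a₀) ≠ 0 := pow_ne_zero _ (by norm_num)
  field_simp at h
  exact h.symm

end BetheDuality
theorem duality_A2_odd
    (n : ℕ) (hn : 2 ≤ n) (N : ℕ) (hN : N = 2 * n - 1)
    (hbar : ℂ) (hbar_ne : hbar ≠ 0) (s : ℂ)
    (hs : s = (Real.pi : ℂ) * Complex.I / (2 * hbar))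
    (Q : ℕ → ℂ → ℂ) (hQ0 : ∀ u, Q 0 u = 1)
    (hQne : ∀ a, 1 ≤ a → a ≤ n → ∀ u, Q a u ≠ 0)
    (hconst : ℕ → ℂ)
    (hQper : ∀ a, 1 ≤ a → a ≤ n → hconst a ≠ 0 ∧
      ∀ u, Q a (u + (Real.pi : ℂ) * Complex.I / hbar) = hconst a * Q a u)
    (Y : ℕ → ℂ → ℂ) (hY : ∀ a u, Y a u = Q a (u - 1) / Q a (u + 1))
    (x : ℕ → ℂ → ℂ)
    (hxa : ∀ a, 1 ≤ a → a ≤ n - 1 → ∀ u : ℂ,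
      x a u = Y a (u + a) / Y (a - 1) (u + a + 1))
    (hxn : ∀ u : ℂ, x n u = Y n (u + n) * Y n (u + n + s) / Y (n - 1) (u + n + 1))
    (hxnbar : ∀ u : ℂ, x (n + 1) u
      = Y (n - 1) (u + n + 1 + s) / (Y n (u + n + 2) * Y n (u + n + 2 + s)))
    (hxbar : ∀ a, 1 ≤ a → a ≤ n - 1 → ∀ u : ℂ,
      x (2 * n - a + 1) u = Y (a - 1) (u + 2 * (n : ℂ) - a + 1 + s)
        / Y a (u + 2 * (n : ℂ) - a + 2 + s))
    (T : ℤ → ℂ → ℂ)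
    (hTneg : ∀ a : ℤ, a < 0 → ∀ u, T a u = 0)
    (hTbig : ∀ a : ℤ, (N : ℤ) + 1 < a → ∀ u, T a u = 0)
    (hTL : ∀ w : ℂ → ℂ, ∀ u : ℂ, Lop x (N + 1) w u
      = ∑ a ∈ Finset.range (N + 2), (-1) ^ a * T a (u + a) * w (u + 2 * a))
    :
    ∀ a : ℤ, ∀ u : ℂ, T a u = T ((N : ℤ) + 1 - a) (u + s) := by
  intro a u
  by_cases hneg : a < 0
  · rw [hTneg a hneg u, hTbig ((N:ℤ) + 1 - a) (by omega) (u + s)]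
  by_cases hbig2 : (N:ℤ) + 1 < a
  · rw [hTbig a hbig2 u, hTneg ((N:ℤ) + 1 - a) (by omega) (u + s)]
  push_neg at hneg hbig2
  have hm : N + 1 = 2 * n := by omega
  obtain ⟨a₀, rfl⟩ : ∃ a₀ : ℕ, (a₀ : ℤ) = a := ⟨a.toNat, Int.toNat_of_nonneg hneg⟩
  have ha₀ : a₀ ≤ 2 * n := by omega
  -- basic Q facts
  have hQne' : ∀ b, b ≤ n → ∀ v, Q b v ≠ 0 := by
    intro b hb v
    rcases Nat.eq_zero_or_pos b with h | h
    · subst h; rw [hQ0]; exact one_ne_zero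
    · exact hQne b h hb v
  have h2s : ∀ b, 1 ≤ b → b ≤ n → ∀ v, Q b (v + 2*s) = hconst b * Q b v := by
    intro b h1 h2 v
    rw [show (2:ℂ)*s = (Real.pi:ℂ) * Complex.I / hbar from by rw [hs]; field_simp]
    exact (hQper b h1 h2).2 v
  -- the chain A and constants cc
  obtain ⟨A, hAdef⟩ : ∃ A : ℕ → ℂ → ℂ, A = fun b v =>
      if b + 1 ≤ n then Q b (v + (b:ℂ) - 1)
      else if b = n then Q n (v + (n:ℂ) - 1) * Q n (v + (n:ℂ) - 1 + s)
      else Q (2*n - b) (v + (b:ℂ) - 1 + s) := ⟨_, rfl⟩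
  obtain ⟨cc, hccdef⟩ : ∃ cc : ℕ → ℂ, cc = fun b =>
      if b = n then (hconst n)⁻¹
      else if n + 1 ≤ b ∧ b ≤ 2*n - 1 then (hconst (2*n - b))⁻¹
      else 1 := ⟨_, rfl⟩
  have hAlow : ∀ b, b + 1 ≤ n → ∀ w, A b w = Q b (w + (b:ℂ) - 1) := by
    intro b hb w; simp only [hAdef]; rw [if_pos hb]
  have hAn : ∀ w, A n w = Q n (w + (n:ℂ) - 1) * Q n (w + (n:ℂ) - 1 + s) := by
    intro w; simp only [hAdef, if_true]; rw [if_neg (show ¬ (n+1 ≤ n) by omega)]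
  have hAhigh : ∀ b, n + 1 ≤ b → ∀ w, A b w = Q (2*n - b) (w + (b:ℂ) - 1 + s) := by
    intro b hb w; simp only [hAdef]; rw [if_neg (by omega), if_neg (by omega)]
  have hA0 : ∀ v, A 0 v = 1 := by
    intro v; rw [hAlow 0 (by omega)]; exact hQ0 _
  have hAm : ∀ v, A (2*n) v = 1 := by
    intro v; rw [hAhigh (2*n) (by omega), show 2*n - 2*n = 0 by omega]; exact hQ0 _
  have hAne : ∀ b, b ≤ 2*n → ∀ v, A b v ≠ 0 := by
    intro b hb v
    simp only [hAdef]
    split_ifs with h1 h2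
    · exact hQne' b (by omega) _
    · exact mul_ne_zero (hQne' n le_rfl _) (hQne' n le_rfl _)
    · exact hQne' (2*n - b) (by omega) _
  have hcne : ∀ b, b ≤ 2*n → cc b ≠ 0 := by
    intro b hb
    simp only [hccdef]
    split_ifs with h1 h2
    · exact inv_ne_zero (hQper n (by omega) le_rfl).1
    · exact inv_ne_zero (hQper (2*n - b) (by omega) (by omega)).1
    · exact one_ne_zero
  have hxA : ∀ b, 1 ≤ b → b ≤ 2*n → ∀ v,
      x b v = A b v * A (b-1) (v+4) / (A (b-1) (v+2) * A b (v+2)) := by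
    intro b hb1 hb2 v
    by_cases hc1 : b + 1 ≤ n
    · rw [hxa b hb1 (by omega) v]
      simp only [hY, hAlow b hc1, hAlow (b-1) (by omega)]
      rw [Nat.cast_sub hb1, Nat.cast_one]
      ring_nf
      simp only [inv_inv]
      ring
    by_cases hc2 : b = n
    · rw [hc2]
      rw [hxn v]
      simp only [hY, hAn, hAlow (n-1) (by omega)]
      rw [Nat.cast_sub (show 1 ≤ n by omega), Nat.cast_one]
      ring_nf
      simp only [inv_inv]
      ring
    by_cases hc3 : b = n + 1
    · rw [hc3]
      rw [hxnbar v]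
      simp only [hY, hAhigh (n+1) (by omega), Nat.add_sub_cancel, hAn,
        show 2*n - (n+1) = n - 1 by omega]
      push_cast
      ring_nf
      simp only [inv_inv]
      ring
    · have hb3 : n + 2 ≤ b := by omega
      have hxb := hxbar (2*n + 1 - b) (by omega) (by omega) v
      rw [show 2*n - (2*n + 1 - b) + 1 = b by omega] at hxb
      rw [hxb]
      simp only [hY, hAhigh b (by omega), hAhigh (b-1) (by omega),
        show 2*n - (b-1) = 2*n + 1 - b by omega, show 2*n + 1 - b - 1 = 2*n - b by omega]
      rw [Nat.cast_sub (show b ≤ 2*n+1 by omega), Nat.cast_sub hb1]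
      push_cast
      ring_nf
      simp only [inv_inv]
      ring
  have hsymA : ∀ b, b ≤ 2*n → ∀ v,
      A (2*n - b) v = cc b * A b (v + ((2*n:ℕ):ℂ) - 2*(b:ℂ) + s) := by
    have hcc_one : ∀ b', b' ≠ n → ¬(n + 1 ≤ b' ∧ b' ≤ 2*n - 1) → cc b' = 1 := by
      intro b' h1 h2; simp only [hccdef]; rw [if_neg h1, if_neg h2]
    intro b hb v
    by_cases hb0 : b = 0
    · rw [hb0]
      rw [show 2*n - 0 = 2*n by omega, hAm, hA0, hcc_one 0 (by omega) (by omega)]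
      norm_num
    by_cases hbn1 : b ≤ n - 1
    · rw [hAhigh (2*n - b) (by omega), show 2*n - (2*n - b) = b by omega,
        hAlow b (by omega), hcc_one b (by omega) (by omega), one_mul]
      congr 1
      rw [Nat.cast_sub (show b ≤ 2*n by omega)]
      push_cast
      ring
    by_cases hbn : b = n
    · rw [hbn, show 2*n - n = n by omega]
      simp only [hAn]
      rw [show cc n = (hconst n)⁻¹ from by simp only [hccdef]; rw [if_pos trivial]]
      have k2 : v + ((2*n:ℕ):ℂ) - 2*(n:ℂ) + s + (n:ℂ) - 1 + s = (v + (n:ℂ) - 1) + 2*s := by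
        push_cast; ring
      have k1 : v + ((2*n:ℕ):ℂ) - 2*(n:ℂ) + s + (n:ℂ) - 1 = v + (n:ℂ) - 1 + s := by
        push_cast; ring
      rw [k2, k1, h2s n (by omega) le_rfl]
      field_simp [(hQper n (by omega) le_rfl).1]
    by_cases hbig3 : b ≤ 2*n - 1
    · rw [hAlow (2*n - b) (by omega), hAhigh b (by omega)]
      rw [show cc b = (hconst (2*n - b))⁻¹ from by
        simp only [hccdef]; rw [if_neg hbn, if_pos ⟨by omega, hbig3⟩]]
      have k1 : v + ((2*n:ℕ):ℂ) - 2*(b:ℂ) + s + (b:ℂ) - 1 + s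
          = (v + ((2*n - b:ℕ):ℂ) - 1) + 2*s := by
        rw [Nat.cast_sub (show b ≤ 2*n by omega)]; push_cast; ring
      rw [k1, h2s (2*n - b) (by omega) (by omega)]
      rw [inv_mul_cancel_left₀ (hQper (2*n - b) (by omega) (by omega)).1]
    · have hb2n : b = 2*n := by omega
      rw [hb2n, show 2*n - 2*n = 0 by omega, hA0, hAm, hcc_one (2*n) (by omega) (by omega)]
      norm_num
  -- assemble
  have hcol : ∀ S, S ⊆ Finset.Icc 1 (2*n) → ∀ v,
      BetheDuality.trm x S v = ∏ b ∈ Finset.range (2*n+1), BetheDuality.Ffac A S v b :=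
    fun S hS v => BetheDuality.collect A x (2*n) hAne hxA (2*n) le_rfl S hS v
  have hdual := BetheDuality.dualterm A x (2*n) s cc hA0 hAm hAne hcne hsymA hcol
  have hTL2 : ∀ (w : ℂ → ℂ) (v : ℂ), Lop x (2*n) w v =
      ∑ k ∈ Finset.range (2*n+1), (-1:ℂ)^k * T (k:ℤ) (v + (k:ℂ)) * w (v + 2*(k:ℂ)) := by
    intro w v
    have h := hTL w v
    rwa [show N + 1 = 2*n from hm, show N + 2 = 2*n + 1 by omega] at h
  have hext := BetheDuality.extract x (fun k => T (k:ℤ)) (2*n)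
    (fun w v => BetheDuality.expand x (2*n) w v) hTL2
  have e1 : T (a₀:ℤ) u = ∑ S ∈ (Finset.Icc 1 (2*n)).powerset.filter (fun S => S.card = a₀),
      BetheDuality.trm x S (u - (a₀:ℂ)) := by
    have h := hext a₀ ha₀ (u - (a₀:ℂ))
    rw [show u - (a₀:ℂ) + (a₀:ℂ) = u by ring] at h
    exact h
  have e2 : T ((N:ℤ) + 1 - (a₀:ℤ)) (u + s) =
      ∑ S ∈ (Finset.Icc 1 (2*n)).powerset.filter (fun S => S.card = 2*n - a₀),
        BetheDuality.trm x S (u + s - ((2*n - a₀ : ℕ):ℂ)) := by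
    have h := hext (2*n - a₀) (by omega) (u + s - ((2*n - a₀:ℕ):ℂ))
    rw [show u + s - ((2*n - a₀:ℕ):ℂ) + ((2*n - a₀:ℕ):ℂ) = u + s by ring] at h
    rw [show (N:ℤ) + 1 - (a₀:ℤ) = ((2*n - a₀:ℕ):ℤ) by omega]
    exact h
  rw [e1, e2]
  refine Finset.sum_nbij' (fun S => BetheDuality.dualS (2*n) S)
    (fun S => BetheDuality.dualS (2*n) S) ?_ ?_ ?_ ?_ ?_
  · intro S hS
    rw [Finset.mem_filter, Finset.mem_powerset] at hS ⊢
    exact ⟨BetheDuality.dualS_subset, by rw [BetheDuality.card_dualS hS.1, hS.2]⟩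
  · intro S hS
    rw [Finset.mem_filter, Finset.mem_powerset] at hS ⊢
    refine ⟨BetheDuality.dualS_subset, ?_⟩
    rw [BetheDuality.card_dualS hS.1, hS.2]
    omega
  · intro S hS
    rw [Finset.mem_filter, Finset.mem_powerset] at hS
    exact BetheDuality.dualS_dualS hS.1
  · intro S hS
    rw [Finset.mem_filter, Finset.mem_powerset] at hS
    exact BetheDuality.dualS_dualS hS.1
  · intro S hS
    rw [Finset.mem_filter, Finset.mem_powerset] at hS
    have h := hdual S hS.1 (u - (a₀:ℂ))
    rw [hS.2] at h
    rw [h]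
    congr 1
    rw [Nat.cast_sub ha₀]
    push_cast
    ring
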